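/- Let f, g : (ℂⁿ, 0) → (ℂ, 0) be holomorphic germs with isolated singularity at the origin. If f and g are bi-Lipschitz right-left equivalent (there exist bi-Lipschitz homeomorphism germs φ : (ℂⁿ,0) → (ℂⁿ,0) and φ' : (ℂ,0) → (ℂ,0) with φ'(f(x)) = g(φ(x)) near 0), then the Łojasiewicz exponents of their gradient maps coincide: 𝓛₀(∇f) = 𝓛₀(∇g). -/

import Mathlib

open Filter MeasureTheory Topology

/-- `ℂⁿ` modelled as functions `Fin n → ℂ`. -/
abbrev En (n : ℕ) := Fin n → ℂ

/-- `a ≲ b` near `0` : there is `C > 0` with `a x ≤ C * b x` on a neighbourhood of `0`. -/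
def EvDom {E : Type*} [NormedAddCommGroup E] (a b : E → ℝ) : Prop :=
  ∃ C : ℝ, 0 < C ∧ ∀ᶠ x in 𝓝 (0 : E), a x ≤ C * b x

/-- The pair `(φ, ψ)` is a germ at `0` of a bi-Lipschitz homeomorphism `(E,0) → (F,0)`,
with `ψ` the inverse of `φ`. -/
def BiLipGerm {E F : Type*} [NormedAddCommGroup E] [NormedAddCommGroup F]
    (φ : E → F) (ψ : F → E) : Prop :=
  φ 0 = 0 ∧ ψ 0 = 0 ∧
  (∃ U ∈ 𝓝 (0 : E), ∃ K : NNReal, LipschitzOnWith K φ U) ∧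
  (∃ V ∈ 𝓝 (0 : F), ∃ K : NNReal, LipschitzOnWith K ψ V) ∧
  (∀ᶠ x in 𝓝 (0 : E), ψ (φ x) = x) ∧ (∀ᶠ y in 𝓝 (0 : F), φ (ψ y) = y)

/-- `f : (ℂⁿ,0) → (ℂ,0)` is a holomorphic germ with an isolated singularity at the origin. -/
def IsolatedSing {n : ℕ} (f : En n → ℂ) : Prop :=
  AnalyticAt ℂ f 0 ∧ f 0 = 0 ∧ fderiv ℂ f 0 = 0 ∧
    ∀ᶠ x in 𝓝[≠] (0 : En n), fderiv ℂ f x ≠ 0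

/-- The Łojasiewicz exponent `𝓛₀(∇f)` of the gradient map of `f`. -/
noncomputable def LojGrad {n : ℕ} (f : En n → ℂ) : ℝ :=
  sInf {α : ℝ | 0 ≤ α ∧ ∃ C : ℝ, 0 < C ∧
    ∀ᶠ x in 𝓝 (0 : En n), ‖x‖ ^ α ≤ C * ‖fderiv ℂ f x‖}

lemma BiLipGerm.symm' {E F : Type*} [NormedAddCommGroup E] [NormedAddCommGroup F]
    {φ : E → F} {ψ : F → E} (h : BiLipGerm φ ψ) : BiLipGerm ψ φ :=
  ⟨h.2.1, h.1, h.2.2.2.1, h.2.2.1, h.2.2.2.2.2, h.2.2.2.2.1⟩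

/-- Key transfer lemma: membership in the Łojasiewicz set transfers along the equivalence. -/
lemma loj_set_subset {n : ℕ} (f g : En n → ℂ) (hfa : AnalyticAt ℂ f 0) (hf0 : f 0 = 0)
    (φ ψ : En n → En n) (hφ : BiLipGerm φ ψ)
    (φ' ψ' : ℂ → ℂ) (hφ' : BiLipGerm φ' ψ')
    (heq : ∀ᶠ x in 𝓝 (0 : En n), φ' (f x) = g (φ x)) :
    {α : ℝ | 0 ≤ α ∧ ∃ C : ℝ, 0 < C ∧
      ∀ᶠ x in 𝓝 (0 : En n), ‖x‖ ^ α ≤ C * ‖fderiv ℂ g x‖} ⊆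
    {α : ℝ | 0 ≤ α ∧ ∃ C : ℝ, 0 < C ∧
      ∀ᶠ x in 𝓝 (0 : En n), ‖x‖ ^ α ≤ C * ‖fderiv ℂ f x‖} := by
  obtain ⟨hφ0, hψ0, ⟨U, hU, K₁, hK₁⟩, ⟨V, hV, K₂, hK₂⟩, hψφ, hφψ⟩ := hφ
  obtain ⟨hφ'0, hψ'0, ⟨U', hU', K₃, hK₃⟩, ⟨V', hV', K₄, hK₄⟩, hinv1, hinv2⟩ := hφ'
  set a : ℝ := (K₃ : ℝ) + 1 with ha_def
  set b : ℝ := (K₂ : ℝ) + 1 with hb_def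
  have ha : (0:ℝ) < a := by positivity
  have hb : (0:ℝ) < b := by positivity
  -- real-scalar Lipschitz bounds with positive constants
  have hφ'lip : ∀ u ∈ U', ∀ v ∈ U', ‖φ' u - φ' v‖ ≤ a * ‖u - v‖ := by
    intro u hu v hv
    have h := hK₃.dist_le_mul u hu v hv
    rw [dist_eq_norm, dist_eq_norm] at h
    nlinarith [norm_nonneg (u - v)]
  have hψlip : ∀ u ∈ V, ∀ v ∈ V, ‖ψ u - ψ v‖ ≤ b * ‖u - v‖ := by
    intro u hu v hv
    have h := hK₂.dist_le_mul u hu v hv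
    rw [dist_eq_norm, dist_eq_norm] at h
    nlinarith [norm_nonneg (u - v)]
  have hφcont : ContinuousAt φ 0 := (hK₁.continuousOn).continuousAt hU
  have hψcontOn : ContinuousOn ψ V := hK₂.continuousOn
  have h0V : (0 : En n) ∈ V := mem_of_mem_nhds hV
  rintro α ⟨hα, C, hC, hEv⟩
  refine ⟨hα, C * b ^ α * (a * b), by positivity, ?_⟩
  have hφ0' : φ 0 = (0 : En n) := hφ0
  -- eventual conditions on x
  have A1 : ∀ᶠ x in 𝓝 (0 : En n), AnalyticAt ℂ f x := hfa.eventually_analyticAt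
  have A2 : ∀ᶠ x in 𝓝 (0 : En n), ∀ᶠ y in 𝓝 x, φ' (f y) = g (φ y) :=
    heq.eventually_nhds
  have A4 : ∀ᶠ x in 𝓝 (0 : En n), φ x ∈ interior V := by
    apply hφcont.eventually_mem
    rw [hφ0']; exact interior_mem_nhds.mpr hV
  have A5 : ∀ᶠ x in 𝓝 (0 : En n), φ x ∈ interior {w | φ (ψ w) = w} := by
    apply hφcont.eventually_mem
    rw [hφ0']; exact interior_mem_nhds.mpr hφψ
  have A6 : ∀ᶠ x in 𝓝 (0 : En n), ‖φ x‖ ^ α ≤ C * ‖fderiv ℂ g (φ x)‖ := by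
    apply hφcont.eventually_mem (s := {y | ‖y‖ ^ α ≤ C * ‖fderiv ℂ g y‖})
    rw [hφ0']; exact hEv
  have A7 : ∀ᶠ x in 𝓝 (0 : En n), f x ∈ interior U' := by
    apply hfa.continuousAt.eventually_mem
    rw [hf0]; exact interior_mem_nhds.mpr hU'
  filter_upwards [A1, A2, hψφ, A4, A5, A6, A7] with x hx1 hx2 hx3 hx4 hx5 hx6 hx7
  set z := φ x with hz_def
  have hzV : z ∈ V := interior_subset hx4
  have hψz : ψ z = x := hx3
  have hψcz : ContinuousAt ψ z := hψcontOn.continuousAt (mem_interior_iff_mem_nhds.mp hx4)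
  have hψtend : Tendsto ψ (𝓝 z) (𝓝 x) := by
    have := hψcz; rwa [ContinuousAt, hψz] at this
  have hfd : DifferentiableAt ℂ f x := hx1.differentiableAt
  set Df := fderiv ℂ f x with hDf_def
  -- Step 1: ‖fderiv g z‖ ≤ a * b * ‖Df‖
  have hDg : ‖fderiv ℂ g z‖ ≤ a * b * ‖Df‖ := by
    refine le_of_forall_pos_le_add fun δ hδ => ?_
    set ε : ℝ := δ / (a * b) with hε_def
    have hε : 0 < ε := by positivity
    have main : ‖fderiv ℂ g z‖ ≤ a * b * (‖Df‖ + ε) := by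
      refine norm_fderiv_le_of_lip' ℂ (by positivity) ?_
      -- eventual conditions on w near z
      have W1 : ∀ᶠ w in 𝓝 z, φ (ψ w) = w := mem_interior_iff_mem_nhds.mp hx5
      have W2 : ∀ᶠ w in 𝓝 z, φ' (f (ψ w)) = g (φ (ψ w)) := hψtend.eventually hx2
      have W3 : ∀ᶠ w in 𝓝 z, f (ψ w) ∈ U' := by
        have hfc : ContinuousAt f x := hx1.continuousAt
        have hU'x : U' ∈ 𝓝 (f x) := mem_interior_iff_mem_nhds.mp hx7
        exact hψtend.eventually (hfc.eventually_mem hU'x)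
      have hflin : ∀ᶠ y in 𝓝 x, ‖f y - f x‖ ≤ (‖Df‖ + ε) * ‖y - x‖ := by
        have hlo := (hfd.hasFDerivAt).isLittleO
        filter_upwards [Asymptotics.isLittleO_iff.mp hlo hε] with y hy
        have h1 : ‖f y - f x‖ ≤ ‖f y - f x - Df (y - x)‖ + ‖Df (y - x)‖ := by
          have := norm_add_le (f y - f x - Df (y - x)) (Df (y - x))
          simpa using this
        have h2 : ‖Df (y - x)‖ ≤ ‖Df‖ * ‖y - x‖ := Df.le_opNorm _
        nlinarith [norm_nonneg (y - x)]
      have W4 : ∀ᶠ w in 𝓝 z, ‖f (ψ w) - f x‖ ≤ (‖Df‖ + ε) * ‖ψ w - x‖ :=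
        hψtend.eventually hflin
      have W5 : ∀ᶠ w in 𝓝 z, w ∈ V := mem_interior_iff_mem_nhds.mp hx4
      filter_upwards [W1, W2, W3, W4, W5] with w hw1 hw2 hw3 hw4 hw5
      have hgw : g w = φ' (f (ψ w)) := by rw [hw2, hw1]
      have hgz : g z = φ' (f x) := (hx2.self_of_nhds).symm
      have hfxU' : f x ∈ U' := interior_subset hx7
      have e1 : ‖g w - g z‖ ≤ a * ‖f (ψ w) - f x‖ := by
        rw [hgw, hgz]; exact hφ'lip _ hw3 _ hfxU'
      have e2 : ‖ψ w - x‖ ≤ b * ‖w - z‖ := by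
        have := hψlip w hw5 z hzV
        rwa [hψz] at this
      have hDfε : (0:ℝ) ≤ ‖Df‖ + ε := by positivity
      calc ‖g w - g z‖ ≤ a * ‖f (ψ w) - f x‖ := e1
        _ ≤ a * ((‖Df‖ + ε) * ‖ψ w - x‖) := by
            exact mul_le_mul_of_nonneg_left hw4 ha.le
        _ ≤ a * ((‖Df‖ + ε) * (b * ‖w - z‖)) := by
            refine mul_le_mul_of_nonneg_left (mul_le_mul_of_nonneg_left e2 hDfε) ha.le
        _ = a * b * (‖Df‖ + ε) * ‖w - z‖ := by ring
    have : a * b * (‖Df‖ + ε) = a * b * ‖Df‖ + δ := by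
      field_simp [hε_def]
      congr 1
      rw [hε_def]
      field_simp
    linarith [main, this.le]
  -- Step 2: chain of inequalities
  have h1 : ‖x‖ ≤ b * ‖z‖ := by
    have : ‖ψ z - ψ 0‖ ≤ b * ‖z - 0‖ := hψlip z hzV 0 h0V
    rwa [hψz, hψ0, sub_zero, sub_zero] at this
  have h2 : ‖x‖ ^ α ≤ (b * ‖z‖) ^ α := Real.rpow_le_rpow (norm_nonneg _) h1 hα
  have h3 : (b * ‖z‖) ^ α = b ^ α * ‖z‖ ^ α := Real.mul_rpow hb.le (norm_nonneg _)
  have hbα : (0:ℝ) < b ^ α := Real.rpow_pos_of_pos hb α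
  calc ‖x‖ ^ α ≤ b ^ α * ‖z‖ ^ α := by rw [← h3]; exact h2
    _ ≤ b ^ α * (C * ‖fderiv ℂ g z‖) := mul_le_mul_of_nonneg_left hx6 hbα.le
    _ ≤ b ^ α * (C * (a * b * ‖Df‖)) := by
        refine mul_le_mul_of_nonneg_left (mul_le_mul_of_nonneg_left hDg hC.le) hbα.le
    _ = C * b ^ α * (a * b) * ‖Df‖ := by ring


/-- **Bi-Lipschitz `𝒜`-invariance of the Łojasiewicz exponent of the gradient.**
If `f, g : (ℂⁿ,0) → (ℂ,0)` are holomorphic germs with isolated singularity at the origin and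
they are bi-Lipschitz right-left equivalent, then `𝓛₀(∇f) = 𝓛₀(∇g)`. -/
theorem biLipschitz_A_equiv_lojGrad_eq {n : ℕ} (f g : En n → ℂ)
    (hf : IsolatedSing f) (hg : IsolatedSing g)
    (φ : En n → En n) (ψ : En n → En n) (hφ : BiLipGerm φ ψ)
    (φ' : ℂ → ℂ) (ψ' : ℂ → ℂ) (hφ' : BiLipGerm φ' ψ')
    (heq : ∀ᶠ x in nhds (0 : En n), φ' (f x) = g (φ x)) :
    LojGrad f = LojGrad g := by
  have hψ0 : ψ 0 = 0 := hφ.2.1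
  have hψcont : ContinuousAt ψ 0 := by
    obtain ⟨V, hV, K, hK⟩ := hφ.2.2.2.1
    exact hK.continuousOn.continuousAt hV
  have hψtend : Tendsto ψ (𝓝 (0 : En n)) (𝓝 (0 : En n)) := by
    have := hψcont; rwa [ContinuousAt, hψ0] at this
  have hfψtend : Tendsto (fun y => f (ψ y)) (𝓝 (0 : En n)) (𝓝 (0 : ℂ)) := by
    have h1 := hf.1.continuousAt
    rw [ContinuousAt, hf.2.1] at h1
    exact h1.comp hψtend
  have heq' : ∀ᶠ y in 𝓝 (0 : En n), ψ' (g y) = f (ψ y) := by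
    filter_upwards [hφ.2.2.2.2.2, hψtend.eventually heq,
      hfψtend.eventually hφ'.2.2.2.2.1] with y h1 h2 h3
    calc ψ' (g y) = ψ' (g (φ (ψ y))) := by rw [h1]
      _ = ψ' (φ' (f (ψ y))) := by rw [h2]
      _ = f (ψ y) := h3
  have s1 := loj_set_subset f g hf.1 hf.2.1 φ ψ hφ φ' ψ' hφ' heq
  have s2 := loj_set_subset g f hg.1 hg.2.1 ψ φ hφ.symm' ψ' φ' hφ'.symm' heq'
  unfold LojGrad
  exact congrArg sInf (Set.Subset.antisymm s2 s1)
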